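/- Let α₁, α₂, α₁₃, β₁, β₂, β₁₃ : (0,∞) → ℝ be continuously differentiable and θ : (0,∞) → ℝ any function. Define φ₁(t) := α₁(t) + t·β₁(t), φ₂(t) := α₂(t) + t·β₂(t), φ₁₃(t) := α₁₃(t) + t·β₁₃(t), and assume α₁(t)·α₁₃(t) − α₂(t)² ≠ 0 and φ₁(t)·φ₁₃(t) − φ₂(t)² ≠ 0 for all t > 0. Suppose for all t > 0: θ(t)·α₁₃(t) = t·α₁₃'(t); 2·θ(t)·α₂(t) = 2·t·α₂'(t) + α₂(t); θ(t)·α₁(t) = t·α₁'(t) + α₁(t); θ(t)·φ₁₃(t) = t·φ₁₃'(t); 2·θ(t)·φ₂(t) = 2·t·φ₂'(t) + φ₂(t); θ(t)·φ₁(t) = t·φ₁'(t) + φ₁(t). Then there exist a differentiable function λ : (0,∞) → ℝ with λ(t) ≠ 0 for all t > 0, and constants a₁,a₂,a₃,b₁,b₂,b₃ ∈ ℝ with a₁·a₃ − a₂² ≠ 0 and (a₁+b₁)(a₃+b₃) − (a₂+b₂)² ≠ 0, such that for all t > 0: α₁(t) = a₁·λ(t), α₂(t) = a₂·√t·λ(t),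 α₁₃(t) = a₃·t·λ(t), β₁(t) = b₁·λ(t)/t, β₂(t) = b₂·λ(t)/√t, β₁₃(t) = b₃·λ(t), and moreover θ(t) = 1 + t·λ'(t)/λ(t). -/

import Mathlib

open Set

lemma ratio_const' (f w c : ℝ → ℝ)
    (hf : ∀ t : ℝ, 0 < t → DifferentiableAt ℝ f t)
    (hw : ∀ t : ℝ, 0 < t → DifferentiableAt ℝ w t)
    (hw0 : ∀ t : ℝ, 0 < t → w t ≠ 0)
    (hfd : ∀ t : ℝ, 0 < t → t * deriv f t = c t * f t)
    (hwd : ∀ t : ℝ, 0 < t → t * deriv w t = c t * w t) :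
    ∀ t : ℝ, 0 < t → f t = (f 1 / w 1) * w t := by
  have hderiv : ∀ t : ℝ, 0 < t → HasDerivAt (fun s => f s / w s) 0 t := by
    intro t ht
    have h := ((hf t ht).hasDerivAt).div ((hw t ht).hasDerivAt) (hw0 t ht)
    have key : deriv f t * w t - f t * deriv w t = 0 := by
      have h2 : t * (deriv f t * w t - f t * deriv w t) = 0 := by
        have e1 := hfd t ht; have e2 := hwd t ht
        linear_combination w t * e1 - f t * e2
      rcases mul_eq_zero.mp h2 with h3 | h3
      · exact absurd h3 ht.ne'
      · exact h3
    rw [key, zero_div] at h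
    exact h
  have hconst : ∀ t : ℝ, 0 < t → f t / w t = f 1 / w 1 := by
    intro t ht
    have hdiffOn : DifferentiableOn ℝ (fun s => f s / w s) (Set.Ioi 0) := fun x hx =>
      ((hderiv x hx).differentiableAt).differentiableWithinAt
    refine (convex_Ioi (0:ℝ)).is_const_of_fderivWithin_eq_zero hdiffOn ?_ ht
      (by norm_num : (1:ℝ) ∈ Set.Ioi 0)
    intro x hx
    rw [fderivWithin_of_isOpen isOpen_Ioi hx, ((hderiv x hx).hasFDerivAt).fderiv]
    ext
    simp
  intro t ht
  have h := hconst t ht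
  rw [div_eq_div_iff (hw0 t ht) (hw0 1 one_pos)] at h
  rw [div_mul_eq_mul_div, eq_div_iff (hw0 1 one_pos)]
  linear_combination h

theorem liouville_conformal_classification
    (α₁ α₂ α₁₃ β₁ β₂ β₁₃ : ℝ → ℝ) (θ : ℝ → ℝ)
    (hα₁ : ContDiffOn ℝ 1 α₁ (Set.Ioi 0)) (hα₂ : ContDiffOn ℝ 1 α₂ (Set.Ioi 0))
    (hα₁₃ : ContDiffOn ℝ 1 α₁₃ (Set.Ioi 0)) (hβ₁ : ContDiffOn ℝ 1 β₁ (Set.Ioi 0))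
    (hβ₂ : ContDiffOn ℝ 1 β₂ (Set.Ioi 0)) (hβ₁₃ : ContDiffOn ℝ 1 β₁₃ (Set.Ioi 0))
    (hα : ∀ t : ℝ, 0 < t → α₁ t * α₁₃ t - (α₂ t) ^ 2 ≠ 0)
    (hφ : ∀ t : ℝ, 0 < t →
      (α₁ t + t * β₁ t) * (α₁₃ t + t * β₁₃ t) - (α₂ t + t * β₂ t) ^ 2 ≠ 0)
    (hsys : ∀ t : ℝ, 0 < t →
      θ t * α₁₃ t = t * deriv α₁₃ t ∧
      2 * θ t * α₂ t = 2 * t * deriv α₂ t + α₂ t ∧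
      θ t * α₁ t = t * deriv α₁ t + α₁ t ∧
      θ t * (α₁₃ t + t * β₁₃ t) = t * deriv (fun s => α₁₃ s + s * β₁₃ s) t ∧
      2 * θ t * (α₂ t + t * β₂ t) =
        2 * t * deriv (fun s => α₂ s + s * β₂ s) t + (α₂ t + t * β₂ t) ∧
      θ t * (α₁ t + t * β₁ t) =
        t * deriv (fun s => α₁ s + s * β₁ s) t + (α₁ t + t * β₁ t)) :
    ∃ lam : ℝ → ℝ,
      (∀ t : ℝ, 0 < t → DifferentiableAt ℝ lam t) ∧
      (∀ t : ℝ, 0 < t → lam t ≠ 0) ∧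
      ∃ a₁ a₂ a₃ b₁ b₂ b₃ : ℝ,
        a₁ * a₃ - a₂ ^ 2 ≠ 0 ∧
        (a₁ + b₁) * (a₃ + b₃) - (a₂ + b₂) ^ 2 ≠ 0 ∧
        ∀ t : ℝ, 0 < t →
          α₁ t = a₁ * lam t ∧
          α₂ t = a₂ * Real.sqrt t * lam t ∧
          α₁₃ t = a₃ * t * lam t ∧
          β₁ t = b₁ * lam t / t ∧
          β₂ t = b₂ * lam t / Real.sqrt t ∧
          β₁₃ t = b₃ * lam t ∧
          θ t = 1 + t * deriv lam t / lam t := by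
  -- differentiability at points of Ioi 0
  have hd : ∀ (f : ℝ → ℝ), ContDiffOn ℝ 1 f (Set.Ioi 0) →
      ∀ t : ℝ, 0 < t → DifferentiableAt ℝ f t := fun f hf t ht =>
    ((hf.differentiableOn one_ne_zero).differentiableAt (Ioi_mem_nhds ht))
  have hdα₁ := hd α₁ hα₁; have hdα₂ := hd α₂ hα₂; have hdα₁₃ := hd α₁₃ hα₁₃
  have hdβ₁ := hd β₁ hβ₁; have hdβ₂ := hd β₂ hβ₂; have hdβ₁₃ := hd β₁₃ hβ₁₃
  -- scalar ODEs
  have e₁ : ∀ t : ℝ, 0 < t → t * deriv α₁ t = (θ t - 1) * α₁ t := by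
    intro t ht; linear_combination -(hsys t ht).2.2.1
  have e₂ : ∀ t : ℝ, 0 < t → t * deriv α₂ t = (θ t - 1/2) * α₂ t := by
    intro t ht; linear_combination (-1/2 : ℝ) * (hsys t ht).2.1
  have e₃ : ∀ t : ℝ, 0 < t → t * deriv α₁₃ t = θ t * α₁₃ t := by
    intro t ht; linear_combination -(hsys t ht).1
  -- the determinant D
  set D : ℝ → ℝ := fun s => α₁ s * α₁₃ s - α₂ s ^ 2 with hDdef
  have hD' : ∀ t : ℝ, 0 < t → HasDerivAt D
      (deriv α₁ t * α₁₃ t + α₁ t * deriv α₁₃ t - 2 * α₂ t * deriv α₂ t) t := by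
    intro t ht
    have h1 := ((hdα₁ t ht).hasDerivAt).mul ((hdα₁₃ t ht).hasDerivAt)
    have h2 := ((hdα₂ t ht).hasDerivAt).pow 2
    have h3 := h1.sub h2
    exact h3.congr_deriv (by push_cast; ring)
  have hDode : ∀ t : ℝ, 0 < t → t * deriv D t = (2 * θ t - 1) * D t := by
    intro t ht
    rw [(hD' t ht).deriv]
    have h1 := e₁ t ht; have h2 := e₂ t ht; have h3 := e₃ t ht
    show t * _ = (2 * θ t - 1) * (α₁ t * α₁₃ t - α₂ t ^ 2)
    linear_combination α₁₃ t * h1 + α₁ t * h3 - 2 * α₂ t * h2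
  -- constant sign of D
  have hDc : ContinuousOn D (Set.Ioi 0) :=
    ((hα₁.continuousOn.mul hα₁₃.continuousOn).sub (hα₂.continuousOn.pow 2))
  set ε : ℝ := if 0 < D 1 then 1 else -1 with hεdef
  have hεD : ∀ t : ℝ, 0 < t → 0 < ε * D t := by
    intro t ht
    have hεD1 : 0 < ε * D 1 := by
      rcases lt_trichotomy (D 1) 0 with h | h | h
      · rw [hεdef, if_neg (by linarith)]; nlinarith
      · exact absurd h (hα 1 one_pos)
      · rw [hεdef, if_pos h]; nlinarith
    by_contra hcon
    push_neg at hcon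
    have hDt : ε * D t < 0 := lt_of_le_of_ne hcon (by
      intro h
      rcases mul_eq_zero.mp h with h' | h'
      · rw [hεdef] at h'; split_ifs at h' <;> norm_num at h'
      · exact hα t ht h')
    have hsub : Set.uIcc t 1 ⊆ Set.Ioi 0 := by
      intro x hx
      rcases Set.mem_uIcc.mp hx with ⟨h1, _⟩ | ⟨h1, _⟩
      · exact lt_of_lt_of_le ht h1
      · exact lt_of_lt_of_le one_pos h1
    have hint := intermediate_value_uIcc (hDc.mono hsub)
    have h0 : (0:ℝ) ∈ Set.uIcc (D t) (D 1) := by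
      rcases lt_trichotomy (D 1) 0 with h | h | h
      · rw [hεdef, if_neg (by linarith)] at hDt
        rw [Set.mem_uIcc]; right; exact ⟨by linarith, by linarith⟩
      · exact absurd h (hα 1 one_pos)
      · rw [hεdef, if_pos h] at hDt
        rw [Set.mem_uIcc]; left; exact ⟨by linarith, by linarith⟩
    obtain ⟨c, hc, hc0⟩ := hint h0
    exact hα c (hsub hc) hc0
  -- the function lam
  set lam : ℝ → ℝ := fun s => Real.sqrt (ε * D s / s) with hlamdef
  have hgpos : ∀ t : ℝ, 0 < t → 0 < ε * D t / t := fun t ht => div_pos (hεD t ht) ht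
  have hlampos : ∀ t : ℝ, 0 < t → 0 < lam t := fun t ht => Real.sqrt_pos.mpr (hgpos t ht)
  have hlamne : ∀ t : ℝ, 0 < t → lam t ≠ 0 := fun t ht => (hlampos t ht).ne'
  have hlamsq : ∀ t : ℝ, 0 < t → lam t * lam t = ε * D t / t := fun t ht =>
    Real.mul_self_sqrt (hgpos t ht).le
  have hlam' : ∀ t : ℝ, 0 < t → HasDerivAt lam
      ((ε * deriv D t * t - ε * D t * 1) / t ^ 2 / (2 * lam t)) t := by
    intro t ht
    have hgd : HasDerivAt (fun s => ε * D s / s)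
        ((ε * deriv D t * t - ε * D t * 1) / t ^ 2) t :=
      (((hD' t ht).differentiableAt.hasDerivAt).const_mul ε).div (hasDerivAt_id' t) ht.ne'
    exact hgd.sqrt (hgpos t ht).ne'
  have hdlam : ∀ t : ℝ, 0 < t → DifferentiableAt ℝ lam t := fun t ht =>
    (hlam' t ht).differentiableAt
  have hlamode : ∀ t : ℝ, 0 < t → t * deriv lam t = (θ t - 1) * lam t := by
    intro t ht
    rw [(hlam' t ht).deriv]
    have hD := hDode t ht
    have hsq' : lam t * lam t * t = ε * D t := by
      rw [hlamsq t ht]; field_simp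
    have hLne := hlamne t ht
    field_simp
    linear_combination ε * hD - (2 * (θ t - 1)) * hsq'
  -- weights
  have hsne : ∀ t : ℝ, 0 < t → Real.sqrt t ≠ 0 := fun t ht => (Real.sqrt_pos.mpr ht).ne'
  have hw₂d : ∀ t : ℝ, 0 < t → DifferentiableAt ℝ (fun s => Real.sqrt s * lam s) t :=
    fun t ht => ((Real.hasDerivAt_sqrt ht.ne').differentiableAt).mul (hdlam t ht)
  have hw₂ne : ∀ t : ℝ, 0 < t → Real.sqrt t * lam t ≠ 0 :=
    fun t ht => mul_ne_zero (hsne t ht) (hlamne t ht)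
  have hw₂ode : ∀ t : ℝ, 0 < t → t * deriv (fun s => Real.sqrt s * lam s) t
      = (θ t - 1/2) * (Real.sqrt t * lam t) := by
    intro t ht
    have h : HasDerivAt (fun s => Real.sqrt s * lam s) _ t :=
      (Real.hasDerivAt_sqrt ht.ne').mul ((hdlam t ht).hasDerivAt)
    rw [h.deriv]
    have hs : Real.sqrt t * Real.sqrt t = t := Real.mul_self_sqrt ht.le
    have hode := hlamode t ht
    have hinv : Real.sqrt t * (Real.sqrt t)⁻¹ = 1 := mul_inv_cancel₀ (hsne t ht)
    linear_combination Real.sqrt t * hode - (lam t / (2 * Real.sqrt t)) * hs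
      + (Real.sqrt t * lam t / 2) * hinv
  have hw₃d : ∀ t : ℝ, 0 < t → DifferentiableAt ℝ (fun s => s * lam s) t :=
    fun t ht => differentiableAt_id.mul (hdlam t ht)
  have hw₃ne : ∀ t : ℝ, 0 < t → t * lam t ≠ 0 :=
    fun t ht => mul_ne_zero ht.ne' (hlamne t ht)
  have hw₃ode : ∀ t : ℝ, 0 < t → t * deriv (fun s => s * lam s) t
      = θ t * (t * lam t) := by
    intro t ht
    have h : HasDerivAt (fun s => s * lam s) _ t := (hasDerivAt_id' t).mul ((hdlam t ht).hasDerivAt)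
    rw [h.deriv]
    linear_combination t * hlamode t ht
  -- φ ODEs and differentiability
  have hdφ₁ : ∀ t : ℝ, 0 < t → DifferentiableAt ℝ (fun s => α₁ s + s * β₁ s) t :=
    fun t ht => (hdα₁ t ht).add (differentiableAt_id.mul (hdβ₁ t ht))
  have hdφ₂ : ∀ t : ℝ, 0 < t → DifferentiableAt ℝ (fun s => α₂ s + s * β₂ s) t :=
    fun t ht => (hdα₂ t ht).add (differentiableAt_id.mul (hdβ₂ t ht))
  have hdφ₃ : ∀ t : ℝ, 0 < t → DifferentiableAt ℝ (fun s => α₁₃ s + s * β₁₃ s) t :=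
    fun t ht => (hdα₁₃ t ht).add (differentiableAt_id.mul (hdβ₁₃ t ht))
  have eφ₁ : ∀ t : ℝ, 0 < t → t * deriv (fun s => α₁ s + s * β₁ s) t
      = (θ t - 1) * (α₁ t + t * β₁ t) := by
    intro t ht; linear_combination -(hsys t ht).2.2.2.2.2
  have eφ₂ : ∀ t : ℝ, 0 < t → t * deriv (fun s => α₂ s + s * β₂ s) t
      = (θ t - 1/2) * (α₂ t + t * β₂ t) := by
    intro t ht; linear_combination (-1/2 : ℝ) * (hsys t ht).2.2.2.2.1
  have eφ₃ : ∀ t : ℝ, 0 < t → t * deriv (fun s => α₁₃ s + s * β₁₃ s) t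
      = θ t * (α₁₃ t + t * β₁₃ t) := by
    intro t ht; linear_combination -(hsys t ht).2.2.2.1
  -- ratios are constant
  have R₁ := ratio_const' α₁ lam (fun s => θ s - 1) hdα₁ hdlam hlamne e₁ hlamode
  have R₂ := ratio_const' α₂ (fun s => Real.sqrt s * lam s) (fun s => θ s - 1/2)
    hdα₂ hw₂d hw₂ne e₂ hw₂ode
  have R₃ := ratio_const' α₁₃ (fun s => s * lam s) θ hdα₁₃ hw₃d hw₃ne e₃ hw₃ode
  have Rφ₁ := ratio_const' (fun s => α₁ s + s * β₁ s) lam (fun s => θ s - 1)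
    hdφ₁ hdlam hlamne eφ₁ hlamode
  have Rφ₂ := ratio_const' (fun s => α₂ s + s * β₂ s) (fun s => Real.sqrt s * lam s)
    (fun s => θ s - 1/2) hdφ₂ hw₂d hw₂ne eφ₂ hw₂ode
  have Rφ₃ := ratio_const' (fun s => α₁₃ s + s * β₁₃ s) (fun s => s * lam s) θ
    hdφ₃ hw₃d hw₃ne eφ₃ hw₃ode
  simp only [Real.sqrt_one, one_mul] at R₁ R₂ R₃ Rφ₁ Rφ₂ Rφ₃
  have hL1 := hlamne 1 one_pos
  refine ⟨lam, hdlam, hlamne, α₁ 1 / lam 1, α₂ 1 / lam 1, α₁₃ 1 / lam 1,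
    (α₁ 1 + β₁ 1) / lam 1 - α₁ 1 / lam 1,
    (α₂ 1 + β₂ 1) / lam 1 - α₂ 1 / lam 1,
    (α₁₃ 1 + β₁₃ 1) / lam 1 - α₁₃ 1 / lam 1, ?_, ?_, ?_⟩
  · intro h
    apply hα 1 one_pos
    have h2 : α₁ 1 * α₁₃ 1 - α₂ 1 ^ 2
        = (α₁ 1 / lam 1 * (α₁₃ 1 / lam 1) - (α₂ 1 / lam 1) ^ 2) * lam 1 ^ 2 := by
      field_simp [hL1]
    rw [h2, h, zero_mul]
  · intro h
    apply hφ 1 one_pos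
    have h2 : (α₁ 1 + 1 * β₁ 1) * (α₁₃ 1 + 1 * β₁₃ 1) - (α₂ 1 + 1 * β₂ 1) ^ 2
        = ((α₁ 1 / lam 1 + ((α₁ 1 + β₁ 1) / lam 1 - α₁ 1 / lam 1)) *
            (α₁₃ 1 / lam 1 + ((α₁₃ 1 + β₁₃ 1) / lam 1 - α₁₃ 1 / lam 1)) -
            (α₂ 1 / lam 1 + ((α₂ 1 + β₂ 1) / lam 1 - α₂ 1 / lam 1)) ^ 2) * lam 1 ^ 2 := by
      field_simp [hL1]
      ring
    rw [h2, h, zero_mul]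
  · intro t ht
    have r₁ := R₁ t ht; have r₂ := R₂ t ht; have r₃ := R₃ t ht
    have rφ₁ := Rφ₁ t ht; have rφ₂ := Rφ₂ t ht; have rφ₃ := Rφ₃ t ht
    have hs : Real.sqrt t * Real.sqrt t = t := Real.mul_self_sqrt ht.le
    refine ⟨by linear_combination r₁, by linear_combination r₂, by linear_combination r₃,
      ?_, ?_, ?_, ?_⟩
    · rw [eq_div_iff ht.ne']
      linear_combination rφ₁ - r₁
    · rw [eq_div_iff (hsne t ht)]
      apply mul_left_cancel₀ (hsne t ht)
      linear_combination rφ₂ - r₂ + β₂ t * hs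
    · apply mul_left_cancel₀ ht.ne'
      linear_combination rφ₃ - r₃
    · have hode := hlamode t ht
      have hLne := hlamne t ht
      field_simp
      linear_combination -hode
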